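/- Let X be a finite set, μ a probability distribution on X, ε ∈ [0,1), and γ : X → [0,1] a function with ∑_{x∈X} μ(x)·γ(x) ≥ 1 − ε. If m is a natural number with ∑_{x∈X} γ(x) ≤ 2^{2m}, then either 2^{2m} > |X|, or the set S of the 2^{2m} elements of X with largest μ-mass satisfies μ(S) ≥ 1 − ε, and hence 2m ≥ H_max^ε(μ) where H_max^ε(μ) = min { log₂ |T| : T ⊆ X, μ(T) ≥ 1 − ε }. -/

import Mathlib

open Finset

lemma exists_top_set {X : Type*} [Fintype X] [DecidableEq X] (μ : X → ℝ) :
    ∀ k, k ≤ Fintype.card X → ∃ S : Finset X, S.card = k ∧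
      ∀ x ∈ S, ∀ y ∉ S, μ y ≤ μ x := by
  intro k
  induction k with
  | zero => intro _; exact ⟨∅, rfl, by simp⟩
  | succ n ih =>
    intro hk
    obtain ⟨S, hScard, hS⟩ := ih (Nat.le_of_succ_le hk)
    have hne : (Sᶜ : Finset X).Nonempty := by
      rw [← Finset.card_pos, Finset.card_compl, hScard]
      omega
    obtain ⟨y₀, hy₀, hmax⟩ := Finset.exists_max_image Sᶜ μ hne
    have hy₀S : y₀ ∉ S := Finset.mem_compl.mp hy₀
    refine ⟨insert y₀ S, by rw [Finset.card_insert_of_notMem hy₀S, hScard], ?_⟩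
    intro x hx y hy
    have hyS : y ∉ S := fun h => hy (Finset.mem_insert_of_mem h)
    rcases Finset.mem_insert.mp hx with rfl | hxS
    · exact hmax y (Finset.mem_compl.mpr hyS)
    · exact hS x hxS y hyS

/-- combinatorial core of the Nayak–Salzman bound. If
`∑ μ(x)γ(x) ≥ 1 - ε` and `∑ γ(x) ≤ 2^{2m}`, then either `2^{2m} > |X|`, or the
set of the `2^{2m}` most likely elements has mass `≥ 1 - ε`, and hence
`2m ≥ H_max^ε(μ)`. -/
theorem stmt1 {X : Type*} [Fintype X] [Nonempty X] (μ : X → ℝ)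
    (hμ0 : ∀ x, 0 ≤ μ x) (hμ1 : ∑ x, μ x = 1) (ε : ℝ) (hε0 : 0 ≤ ε) (hε1 : ε < 1)
    (γ : X → ℝ) (hγ0 : ∀ x, 0 ≤ γ x) (hγ1 : ∀ x, γ x ≤ 1)
    (hsucc : 1 - ε ≤ ∑ x, μ x * γ x) (m : ℕ) (hm : ∑ x, γ x ≤ (2 : ℝ) ^ (2 * m)) :
    2 ^ (2 * m) > Fintype.card X ∨
      ∃ S : Finset X, S.card = 2 ^ (2 * m) ∧
        (∀ x ∈ S, ∀ y ∉ S, μ y ≤ μ x) ∧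
        (1 - ε ≤ ∑ x ∈ S, μ x) ∧
        sInf {r : ℝ | ∃ T : Finset X, 1 - ε ≤ ∑ x ∈ T, μ x ∧ r = Real.logb 2 T.card}
          ≤ 2 * m := by
  classical
  by_cases hcard : 2 ^ (2 * m) > Fintype.card X
  · exact Or.inl hcard
  right
  push_neg at hcard
  obtain ⟨S, hScard, hS⟩ := exists_top_set μ (2 ^ (2 * m)) hcard
  have hSne : S.Nonempty := by
    rw [← Finset.card_pos, hScard]; positivity
  -- a = min of μ on S
  obtain ⟨x₀, hx₀, hminv⟩ := Finset.exists_min_image S μ hSne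
  set a := μ x₀ with ha
  have ha0 : 0 ≤ a := hμ0 x₀
  have hout : ∀ y ∉ S, μ y ≤ a := fun y hy => hS x₀ hx₀ y hy
  -- key inequality: ∑ μγ ≤ ∑_S μ
  have hsplit : ∑ x, μ x * γ x = ∑ x ∈ S, μ x * γ x + ∑ x ∈ Sᶜ, μ x * γ x :=
    (Finset.sum_add_sum_compl S _).symm
  have hsplitγ : ∑ x, γ x = ∑ x ∈ S, γ x + ∑ x ∈ Sᶜ, γ x :=
    (Finset.sum_add_sum_compl S _).symm
  have h1 : ∑ x ∈ Sᶜ, μ x * γ x ≤ a * ∑ x ∈ Sᶜ, γ x := by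
    rw [Finset.mul_sum]
    exact Finset.sum_le_sum fun y hy =>
      mul_le_mul_of_nonneg_right (hout y (Finset.mem_compl.mp hy)) (hγ0 y)
  have h2 : ∑ x ∈ Sᶜ, γ x ≤ (2 : ℝ) ^ (2 * m) - ∑ x ∈ S, γ x := by
    linarith [hsplitγ, hm]
  have h3 : a * ((2 : ℝ) ^ (2 * m) - ∑ x ∈ S, γ x) ≤ ∑ x ∈ S, μ x - ∑ x ∈ S, μ x * γ x := by
    have : a * ((2 : ℝ) ^ (2 * m) - ∑ x ∈ S, γ x) = ∑ x ∈ S, a * (1 - γ x) := by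
      simp only [mul_sub, mul_one, Finset.sum_sub_distrib, Finset.sum_const, hScard,
        nsmul_eq_mul, Finset.mul_sum]
      push_cast
      ring
    rw [this, ← Finset.sum_sub_distrib]
    refine Finset.sum_le_sum fun x hx => ?_
    have := hminv x hx
    nlinarith [hγ1 x, hγ0 x, hμ0 x]
  have hmass : 1 - ε ≤ ∑ x ∈ S, μ x := by
    have hγc : 0 ≤ ∑ x ∈ Sᶜ, γ x := Finset.sum_nonneg fun x _ => hγ0 x
    nlinarith [hsucc, hsplit, h1, h2, h3, ha0]
  refine ⟨S, hScard, hS, hmass, ?_⟩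
  have hmem : (2 * m : ℝ) ∈
      {r : ℝ | ∃ T : Finset X, 1 - ε ≤ ∑ x ∈ T, μ x ∧ r = Real.logb 2 T.card} := by
    refine ⟨S, hmass, ?_⟩
    rw [hScard]
    push_cast
    rw [Real.logb, Real.log_pow]
    have h2pos : Real.log 2 ≠ 0 := Real.log_ne_zero_of_pos_of_ne_one (by norm_num) (by norm_num)
    field_simp
    norm_num
  have hbdd : BddBelow {r : ℝ | ∃ T : Finset X, 1 - ε ≤ ∑ x ∈ T, μ x ∧ r = Real.logb 2 T.card} := by
    refine ⟨0, fun r hr => ?_⟩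
    obtain ⟨T, hT, rfl⟩ := hr
    have hTne : T.Nonempty := by
      rw [Finset.nonempty_iff_ne_empty]
      rintro rfl
      simp at hT; linarith
    have : (1 : ℝ) ≤ T.card := by exact_mod_cast Finset.card_pos.mpr hTne
    exact Real.logb_nonneg (by norm_num) this
  exact csInf_le hbdd hmem
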